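/- Let K be a field equipped with a nonarchimedean absolute value |·| : K → ℝ with |2| = 1, let t ∈ K satisfy 0 < |t| < 1, and set f(a) = (a² − t)²/(4a(a−1)(a−t)). Then: (i) if |t| < |a|² and |a| < 1, then |f(a)| = |a|²; (ii) if |a|² < |t| and |t| < |a|, then |f(a)| = |t|²/|a|². -/

import Mathlib

lemma nonarch_sub_eq_left {K : Type*} [Field K] (v : AbsoluteValue K ℝ)
    (hna : IsNonarchimedean v) {x y : K} (h : v y < v x) : v (x - y) = v x := by
  have h1 : v (x - y) ≤ v x := by
    have := hna x (-y)
    simpa [sub_eq_add_neg, max_le_iff, h.le] using this.trans (max_le le_rfl (by simp [h.le]))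
  have h2 : v x ≤ v (x - y) := by
    have := hna (x - y) y
    simp only [sub_add_cancel] at this
    rcases max_cases (v (x - y)) (v y) with ⟨he, _⟩ | ⟨he, _⟩
    · rwa [he] at this
    · rw [he] at this; exact absurd this (not_le.mpr h)
  linarith

/-- For a field `K` with a nonarchimedean absolute value `v` with `v 2 = 1`, `t ∈ K` with
`0 < v t < 1`, and `f a = (a² - t)² / (4a(a-1)(a-t))`:
(i) if `v t < (v a)²` and `v a < 1` then `v (f a) = (v a)²`;
(ii) if `(v a)² < v t` and `v t < v a` then `v (f a) = (v t)² / (v a)²`. -/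
theorem lattes_tent_middle {K : Type*} [Field K] (v : AbsoluteValue K ℝ)
    (hna : IsNonarchimedean v) (h2 : v 2 = 1) (t : K) (ht0 : 0 < v t) (ht1 : v t < 1)
    (f : K → K) (hf : ∀ a, f a = (a ^ 2 - t) ^ 2 / (4 * a * (a - 1) * (a - t))) :
    (∀ a : K, v t < (v a) ^ 2 → v a < 1 → v (f a) = (v a) ^ 2) ∧
    (∀ a : K, (v a) ^ 2 < v t → v t < v a → v (f a) = (v t) ^ 2 / (v a) ^ 2) := by
  have h4 : v 4 = 1 := by
    have : (4 : K) = 2 * 2 := by norm_num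
    rw [this, v.map_mul, h2]; ring
  constructor
  · intro a hta ha1
    have ha0 : 0 < v a := by nlinarith [v.nonneg a]
    have hnum : v (a ^ 2 - t) = (v a) ^ 2 := by
      rw [nonarch_sub_eq_left v hna (by rwa [v.map_pow]), v.map_pow]
    have ha1' : v (a - 1) = 1 := by
      rw [← v.map_neg, neg_sub, nonarch_sub_eq_left v hna (by simpa using ha1)]; simp
    have hat : v (a - t) = v a := by
      apply nonarch_sub_eq_left v hna
      nlinarith
    rw [hf, map_div₀, v.map_pow, hnum, v.map_mul, v.map_mul, v.map_mul, h4, ha1', hat]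
    field_simp
  · intro a hat hta
    have ha0 : 0 < v a := lt_trans ht0 hta
    have ha1 : v a < 1 := by nlinarith
    have hnum : v (a ^ 2 - t) = v t := by
      rw [← v.map_neg, neg_sub, nonarch_sub_eq_left v hna (by rwa [v.map_pow])]
    have ha1' : v (a - 1) = 1 := by
      rw [← v.map_neg, neg_sub, nonarch_sub_eq_left v hna (by simpa using ha1)]; simp
    have hatv : v (a - t) = v a := nonarch_sub_eq_left v hna hta
    rw [hf, map_div₀, v.map_pow, hnum, v.map_mul, v.map_mul, v.map_mul, h4, ha1', hatv]
    field_simp
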